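/- Let ρ and σ be n×n complex positive semidefinite matrices (not necessarily normalized) with ‖ρ − σ‖₁ ≤ η for some η > 0. Let W be the span of all eigenvectors of σ with eigenvalue strictly exceeding η, and let Π_W be the orthogonal projection onto W. Then ‖(I − Π_W) ρ (I − Π_W)‖_∞ ≤ 2η. -/

import Mathlib

open scoped ComplexOrder

/-- The trace norm of a complex matrix: the trace of the positive semidefinite
square root of `Aᴴ * A`. -/
noncomputable def traceNorm {n : ℕ} (A : Matrix (Fin n) (Fin n) ℂ) : ℝ :=
  ((Matrix.posSemidef_conjTranspose_mul_self A).1.eigenvectorUnitary.1 *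
    Matrix.diagonal ((fun x : ℝ => (x : ℂ)) ∘ (√·) ∘ (Matrix.posSemidef_conjTranspose_mul_self A).1.eigenvalues) *
    (star (Matrix.posSemidef_conjTranspose_mul_self A).1.eigenvectorUnitary :
      Matrix (Fin n) (Fin n) ℂ)).trace.re

/-- The operator (spectral) norm of a complex matrix: the norm of the induced
operator on Euclidean space, i.e. the largest singular value. -/
noncomputable def opNorm {n : ℕ} (A : Matrix (Fin n) (Fin n) ℂ) : ℝ :=
  ‖Matrix.toEuclideanCLM (𝕜 := ℂ) A‖

open Matrix Complex
open scoped Matrix.Norms.L2Operator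

namespace StmtAux

variable {n : ℕ}

lemma sum_mulVec' {ι : Type*} (s : Finset ι) (M : ι → Matrix (Fin n) (Fin n) ℂ)
    (y : Fin n → ℂ) : (∑ i ∈ s, M i) *ᵥ y = ∑ i ∈ s, M i *ᵥ y := by
  induction s using Finset.cons_induction with
  | empty => simp
  | cons a s ha ih => simp [Matrix.add_mulVec, ih]

lemma dotProduct_sum' {ι : Type*} (s : Finset ι) (w : Fin n → ℂ) (f : ι → Fin n → ℂ) :
    w ⬝ᵥ (∑ i ∈ s, f i) = ∑ i ∈ s, w ⬝ᵥ f i := by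
  simp only [dotProduct, Finset.sum_apply, Finset.mul_sum]
  exact Finset.sum_comm

lemma dot_vecMulVec (w a b y : Fin n → ℂ) :
    w ⬝ᵥ (vecMulVec a b *ᵥ y) = (w ⬝ᵥ a) * (b ⬝ᵥ y) := by
  rw [show (w ⬝ᵥ a) * (b ⬝ᵥ y) = ∑ k, ∑ j, (w k * a k) * (b j * y j) from
    Finset.sum_mul_sum _ _ _ _]
  simp only [dotProduct, mulVec, vecMulVec_apply, Finset.mul_sum]
  refine Finset.sum_congr rfl fun k _ => Finset.sum_congr rfl fun j _ => by ring

lemma conj_dot (a y : Fin n → ℂ) : star y ⬝ᵥ a = (starRingEnd ℂ) (star a ⬝ᵥ y) := by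
  simp [dotProduct, map_sum, mul_comm]

lemma quad_expand (lam : Fin n → ℝ) (v : Fin n → Fin n → ℂ) (y : Fin n → ℂ) :
    star y ⬝ᵥ ((∑ i, (lam i : ℂ) • vecMulVec (v i) (star (v i))) *ᵥ y)
      = ∑ i, (lam i : ℂ) *
          ((starRingEnd ℂ) (star (v i) ⬝ᵥ y) * (star (v i) ⬝ᵥ y)) := by
  rw [sum_mulVec', dotProduct_sum']
  refine Finset.sum_congr rfl fun i _ => ?_
  rw [smul_mulVec, dotProduct_smul, dot_vecMulVec, conj_dot]
  simp [mul_assoc]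

lemma sum_vvT_eq_one (v : Fin n → Fin n → ℂ)
    (horth : ∀ i j, star (v i) ⬝ᵥ v j = if i = j then 1 else 0) :
    ∑ i, vecMulVec (v i) (star (v i)) = (1 : Matrix (Fin n) (Fin n) ℂ) := by
  have h1 : (Matrix.of fun k i => v i k)ᴴ * (Matrix.of fun k i => v i k) = 1 := by
    ext i j
    simpa [Matrix.mul_apply, Matrix.conjTranspose_apply, dotProduct, Matrix.one_apply]
      using horth i j
  have h2 := mul_eq_one_comm.mp h1
  ext k l
  have := congrFun (congrFun h2 k) l
  simpa [Matrix.mul_apply, Matrix.conjTranspose_apply, Matrix.sum_apply,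
    vecMulVec_apply] using this

lemma sum_normSq_dot (v : Fin n → Fin n → ℂ)
    (horth : ∀ i j, star (v i) ⬝ᵥ v j = if i = j then 1 else 0) (y : Fin n → ℂ) :
    ∑ i, Complex.normSq (star (v i) ⬝ᵥ y) = (star y ⬝ᵥ y).re := by
  have h1 : star y ⬝ᵥ y
      = ∑ i, ((starRingEnd ℂ) (star (v i) ⬝ᵥ y) * (star (v i) ⬝ᵥ y)) := by
    rw [show star y ⬝ᵥ y = star y ⬝ᵥ ((1 : Matrix (Fin n) (Fin n) ℂ) *ᵥ y) from by
        rw [one_mulVec],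
      ← sum_vvT_eq_one v horth, sum_mulVec', dotProduct_sum']
    refine Finset.sum_congr rfl fun i _ => ?_
    rw [dot_vecMulVec, conj_dot]
  rw [h1, Complex.re_sum]
  refine (Finset.sum_congr rfl fun i _ => ?_).symm
  rw [mul_comm, Complex.mul_conj, Complex.ofReal_re]

open scoped MatrixOrder in
lemma traceNorm_herm {A : Matrix (Fin n) (Fin n) ℂ} (hA : A.IsHermitian) :
    traceNorm A = ∑ i, |hA.eigenvalues i| := by
  classical
  set U : Matrix (Fin n) (Fin n) ℂ := (hA.eigenvectorUnitary : Matrix (Fin n) (Fin n) ℂ)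
  have hU1 : Uᴴ * U = 1 := by
    simpa [Matrix.star_eq_conjTranspose] using
      Matrix.mem_unitaryGroup_iff'.mp hA.eigenvectorUnitary.2
  have hU2 : U * Uᴴ = 1 := by
    simpa [Matrix.star_eq_conjTranspose] using
      Matrix.mem_unitaryGroup_iff.mp hA.eigenvectorUnitary.2
  set C : Matrix (Fin n) (Fin n) ℂ :=
    U * Matrix.diagonal (fun i => (RCLike.ofReal |hA.eigenvalues i| : ℂ)) * Uᴴ with hC
  have hCpsd : C.PosSemidef := by
    refine Matrix.PosSemidef.mul_mul_conjTranspose_same ?_ U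
    exact Matrix.posSemidef_diagonal_iff.mpr fun i =>
      RCLike.ofReal_nonneg.mpr (abs_nonneg _)
  have hdd : Matrix.diagonal (fun i => (RCLike.ofReal |hA.eigenvalues i| : ℂ))
      * Matrix.diagonal (fun i => (RCLike.ofReal |hA.eigenvalues i| : ℂ))
      = Matrix.diagonal (RCLike.ofReal ∘ hA.eigenvalues)
        * Matrix.diagonal (RCLike.ofReal ∘ hA.eigenvalues) := by
    rw [Matrix.diagonal_mul_diagonal, Matrix.diagonal_mul_diagonal]
    have hfun : (fun i => (RCLike.ofReal |hA.eigenvalues i| : ℂ) * RCLike.ofReal |hA.eigenvalues i|)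
        = fun i => (RCLike.ofReal ∘ hA.eigenvalues) i * (RCLike.ofReal ∘ hA.eigenvalues) i := by
      funext i
      simp only [Function.comp_apply]
      rw [← RCLike.ofReal_mul, ← RCLike.ofReal_mul, abs_mul_abs_self]
    rw [hfun]
  have hCsq : C ^ 2 = Aᴴ * A := by
    have hU1' : ∀ X : Matrix (Fin n) (Fin n) ℂ, Uᴴ * (U * X) = X := fun X => by
      rw [← Matrix.mul_assoc, hU1, Matrix.one_mul]
    rw [hA.eq, pow_two]
    conv_rhs => rw [hA.spectral_theorem, Unitary.conjStarAlgAut_apply]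
    rw [Matrix.star_eq_conjTranspose]
    simp only [hC, Matrix.mul_assoc]
    rw [hU1', hU1']
    congr 1
    rw [← Matrix.mul_assoc, ← Matrix.mul_assoc, hdd]
  have hsqrt : C = (Matrix.posSemidef_conjTranspose_mul_self A).1.eigenvectorUnitary.1 *
      Matrix.diagonal ((fun x : ℝ => (x : ℂ)) ∘ (√·) ∘
        (Matrix.posSemidef_conjTranspose_mul_self A).1.eigenvalues) *
      (star (Matrix.posSemidef_conjTranspose_mul_self A).1.eigenvectorUnitary :
        Matrix (Fin n) (Fin n) ℂ) := by
    have h1 : CFC.sqrt (Aᴴ * A) = C :=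
      (CFC.sqrt_eq_iff _ _ (Matrix.posSemidef_conjTranspose_mul_self A).nonneg
        hCpsd.nonneg).mpr (by rw [← pow_two]; exact hCsq)
    rw [← h1, CFC.sqrt_eq_real_sqrt _ (Matrix.posSemidef_conjTranspose_mul_self A).nonneg,
      cfcₙ_eq_cfc, (Matrix.posSemidef_conjTranspose_mul_self A).1.cfc_eq]
    rfl
  rw [traceNorm, ← hsqrt, hC, Matrix.trace_mul_cycle, hU1, Matrix.one_mul,
    Matrix.trace_diagonal]
  rw [Complex.re_sum]
  simp

lemma herm_quad_le {A : Matrix (Fin n) (Fin n) ℂ} (hA : A.IsHermitian) (y : Fin n → ℂ) :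
    (star y ⬝ᵥ A *ᵥ y).re ≤ traceNorm A * (star y ⬝ᵥ y).re := by
  classical
  set U : Matrix (Fin n) (Fin n) ℂ := (hA.eigenvectorUnitary : Matrix (Fin n) (Fin n) ℂ)
  have hU1 : Uᴴ * U = 1 := by
    simpa [Matrix.star_eq_conjTranspose] using
      Matrix.mem_unitaryGroup_iff'.mp hA.eigenvectorUnitary.2
  set z : Fin n → ℂ := Uᴴ *ᵥ y with hz
  have hstz : star z = star y ᵥ* U := by
    rw [hz, Matrix.star_mulVec, Matrix.conjTranspose_conjTranspose]
  have hquad : star y ⬝ᵥ A *ᵥ y = ∑ i, (hA.eigenvalues i : ℂ) * ((starRingEnd ℂ) (z i) * z i) := by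
    conv_lhs => rw [hA.spectral_theorem, Unitary.conjStarAlgAut_apply]
    rw [← Matrix.mulVec_mulVec, ← Matrix.mulVec_mulVec, Matrix.dotProduct_mulVec, ← hstz,
      Matrix.star_eq_conjTranspose, Matrix.dotProduct_mulVec, ← Matrix.dotProduct_mulVec]
    simp only [dotProduct, Matrix.mulVec_diagonal, Function.comp]
    refine Finset.sum_congr rfl fun i _ => ?_
    simp only [Pi.star_apply, RCLike.star_def, hz,
      show ((hA.eigenvectorUnitary : Matrix (Fin n) (Fin n) ℂ)) = U from rfl]
    exact mul_left_comm ((starRingEnd ℂ) ((Uᴴ *ᵥ y) i)) ((hA.eigenvalues i : ℂ)) ((Uᴴ *ᵥ y) i)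
  have hzz : star z ⬝ᵥ z = star y ⬝ᵥ y := by
    rw [hstz, hz, Matrix.dotProduct_mulVec, Matrix.vecMul_vecMul,
      show U * Uᴴ = 1 from by
        simpa [Matrix.star_eq_conjTranspose] using
          Matrix.mem_unitaryGroup_iff.mp hA.eigenvectorUnitary.2,
      Matrix.vecMul_one]
  have hsum : (star y ⬝ᵥ y).re = ∑ j, Complex.normSq (z j) := by
    rw [← hzz]
    simp only [dotProduct, Complex.re_sum]
    refine Finset.sum_congr rfl fun j _ => ?_
    simp only [Pi.star_apply, RCLike.star_def]
    rw [mul_comm, Complex.mul_conj, Complex.ofReal_re]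
  have hre : (star y ⬝ᵥ A *ᵥ y).re = ∑ i, hA.eigenvalues i * Complex.normSq (z i) := by
    rw [hquad, Complex.re_sum]
    refine Finset.sum_congr rfl fun i _ => ?_
    rw [mul_comm ((starRingEnd ℂ) (z i)), Complex.mul_conj, ← Complex.ofReal_mul,
      Complex.ofReal_re]
  rw [hre, traceNorm_herm hA, hsum, Finset.sum_mul]
  refine Finset.sum_le_sum fun i _ => ?_
  calc hA.eigenvalues i * Complex.normSq (z i)
      ≤ |hA.eigenvalues i| * Complex.normSq (z i) :=
        mul_le_mul_of_nonneg_right (le_abs_self _) (Complex.normSq_nonneg _)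
    _ ≤ |hA.eigenvalues i| * ∑ j, Complex.normSq (z j) := by
        refine mul_le_mul_of_nonneg_left ?_ (abs_nonneg _)
        exact Finset.single_le_sum (fun j _ => Complex.normSq_nonneg (z j))
          (Finset.mem_univ i)

end StmtAux

open StmtAux in
open scoped MatrixOrder in
theorem stmt1 {n : ℕ}
    (ρ σ : Matrix (Fin n) (Fin n) ℂ)
    (hρ : ρ.PosSemidef) (hσ : σ.PosSemidef)
    (η : ℝ) (hη : 0 < η) (hdist : traceNorm (ρ - σ) ≤ η)
    (lam : Fin n → ℝ) (v : Fin n → Fin n → ℂ)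
    (horth : ∀ i j, dotProduct (star (v i)) (v j) = if i = j then 1 else 0)
    (hspec : σ = ∑ i, (lam i : ℂ) • Matrix.vecMulVec (v i) (star (v i))) :
    opNorm (((1 : Matrix (Fin n) (Fin n) ℂ)
          - ∑ i ∈ Finset.univ.filter (fun i : Fin n => η < lam i),
              Matrix.vecMulVec (v i) (star (v i))) * ρ *
        ((1 : Matrix (Fin n) (Fin n) ℂ)
          - ∑ i ∈ Finset.univ.filter (fun i : Fin n => η < lam i),
              Matrix.vecMulVec (v i) (star (v i)))) ≤ 2 * η := by
  set F : Finset (Fin n) := Finset.univ.filter (fun i : Fin n => η < lam i) with hF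
  set P : Matrix (Fin n) (Fin n) ℂ := ∑ i ∈ F, vecMulVec (v i) (star (v i)) with hP
  set Q : Matrix (Fin n) (Fin n) ℂ := 1 - P with hQ
  have hPherm : Pᴴ = P := by
    ext k l
    simp only [hP, Matrix.conjTranspose_apply, Matrix.sum_apply, vecMulVec_apply, star_sum,
      star_mul', Pi.star_apply, star_star]
    exact Finset.sum_congr rfl fun i _ => mul_comm _ _
  have hQherm : Qᴴ = Q := by
    rw [hQ, Matrix.conjTranspose_sub, Matrix.conjTranspose_one, hPherm]
  -- the coefficient computations
  have hc : ∀ x : Fin n → ℂ, ∀ i,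
      star (v i) ⬝ᵥ (Q *ᵥ x) = if i ∈ F then 0 else star (v i) ⬝ᵥ x := by
    intro x i
    rw [hQ, Matrix.sub_mulVec, Matrix.one_mulVec, dotProduct_sub, hP, sum_mulVec',
      dotProduct_sum']
    have hterm : ∑ j ∈ F, star (v i) ⬝ᵥ (vecMulVec (v j) (star (v j)) *ᵥ x)
        = ∑ j ∈ F, if i = j then star (v j) ⬝ᵥ x else 0 :=
      Finset.sum_congr rfl fun j _ => by rw [dot_vecMulVec, horth]; split <;> simp
    rw [hterm, Finset.sum_ite_eq]
    split <;> simp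
  have hlam : ∀ i, 0 ≤ lam i := by
    intro i
    have h0 := hσ.dotProduct_mulVec_nonneg (v i)
    have he : star (v i) ⬝ᵥ σ *ᵥ (v i) = (lam i : ℂ) := by
      rw [hspec, quad_expand]
      have hterm : ∑ j, (lam j : ℂ) *
            ((starRingEnd ℂ) (star (v j) ⬝ᵥ v i) * (star (v j) ⬝ᵥ v i))
          = ∑ j, if j = i then (lam j : ℂ) else 0 :=
        Finset.sum_congr rfl fun j _ => by rw [horth]; split <;> simp
      rw [hterm, Finset.sum_ite_eq']
      simp
    rw [he] at h0
    exact Complex.zero_le_real.mp h0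
  -- key estimate on quadratic forms
  have hkey : ∀ x : Fin n → ℂ,
      (star x ⬝ᵥ ((Q * ρ * Q) *ᵥ x)).re ≤ 2 * η * (star x ⬝ᵥ x).re := by
    intro x
    set y : Fin n → ℂ := Q *ᵥ x with hy
    have hsty : star y = star x ᵥ* Q := by
      rw [hy, Matrix.star_mulVec, hQherm]
    have hform : star x ⬝ᵥ ((Q * ρ * Q) *ᵥ x) = star y ⬝ᵥ ρ *ᵥ y := by
      rw [← Matrix.mulVec_mulVec, ← Matrix.mulVec_mulVec, Matrix.dotProduct_mulVec, ← hsty, hy]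
    have hcx : ∀ i, star (v i) ⬝ᵥ y = if i ∈ F then 0 else star (v i) ⬝ᵥ x := hc x
    have hnormsq_le : ∀ i, Complex.normSq (star (v i) ⬝ᵥ y) ≤ Complex.normSq (star (v i) ⬝ᵥ x) := by
      intro i
      rw [hcx i]
      split
      · simpa using Complex.normSq_nonneg _
      · exact le_refl _
    have hσy : (star y ⬝ᵥ σ *ᵥ y).re = ∑ i, lam i * Complex.normSq (star (v i) ⬝ᵥ y) := by
      rw [hspec, quad_expand, Complex.re_sum]
      refine Finset.sum_congr rfl fun i _ => ?_
      rw [mul_comm ((starRingEnd ℂ) _), Complex.mul_conj, ← Complex.ofReal_mul,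
        Complex.ofReal_re]
    have hsum_x := sum_normSq_dot v horth x
    have hsum_y := sum_normSq_dot v horth y
    have hσle : (star y ⬝ᵥ σ *ᵥ y).re ≤ η * (star x ⬝ᵥ x).re := by
      rw [hσy, ← hsum_x, Finset.mul_sum]
      refine Finset.sum_le_sum fun i _ => ?_
      rcases em (i ∈ F) with hi | hi
      · rw [hcx i, if_pos hi]
        simpa using mul_nonneg (le_of_lt hη) (Complex.normSq_nonneg _)
      · rw [hcx i, if_neg hi]
        have hle : lam i ≤ η :=
          le_of_not_gt fun hgt => hi (by simp [hF, Finset.mem_filter, hgt])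
        exact mul_le_mul_of_nonneg_right hle (Complex.normSq_nonneg _)
    have hyle : (star y ⬝ᵥ y).re ≤ (star x ⬝ᵥ x).re := by
      rw [← hsum_y, ← hsum_x]
      exact Finset.sum_le_sum fun i _ => hnormsq_le i
    have hynn : 0 ≤ (star y ⬝ᵥ y).re := by
      rw [← hsum_y]
      exact Finset.sum_nonneg fun i _ => Complex.normSq_nonneg _
    have hAherm : (ρ - σ).IsHermitian := hρ.1.sub hσ.1
    have hdiffle : (star y ⬝ᵥ (ρ - σ) *ᵥ y).re ≤ η * (star x ⬝ᵥ x).re :=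
      calc (star y ⬝ᵥ (ρ - σ) *ᵥ y).re ≤ traceNorm (ρ - σ) * (star y ⬝ᵥ y).re :=
            herm_quad_le hAherm y
        _ ≤ η * (star y ⬝ᵥ y).re := mul_le_mul_of_nonneg_right hdist hynn
        _ ≤ η * (star x ⬝ᵥ x).re := mul_le_mul_of_nonneg_left hyle (le_of_lt hη)
    have hsplit : star y ⬝ᵥ ρ *ᵥ y = star y ⬝ᵥ σ *ᵥ y + star y ⬝ᵥ (ρ - σ) *ᵥ y := by
      rw [Matrix.sub_mulVec, dotProduct_sub]
      ring
    rw [hform, hsplit, Complex.add_re]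
    linarith
  -- the operator norm bound via `B = √ρ * Q`
  set B : Matrix (Fin n) (Fin n) ℂ := CFC.sqrt ρ * Q with hB
  have hBB : Bᴴ * B = Q * ρ * Q := by
    rw [hB, Matrix.conjTranspose_mul, hQherm,
      (Matrix.nonneg_iff_posSemidef.mp (CFC.sqrt_nonneg ρ)).1,
      Matrix.mul_assoc, ← Matrix.mul_assoc (CFC.sqrt ρ), CFC.sqrt_mul_sqrt_self ρ hρ.nonneg, ← Matrix.mul_assoc]
  have hopeq : opNorm (Q * ρ * Q) = ‖B‖ * ‖B‖ := by
    rw [← hBB, ← Matrix.l2_opNorm_conjTranspose_mul_self]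
    rfl
  have hBle : ‖B‖ ≤ Real.sqrt (2 * η) := by
    rw [Matrix.l2_opNorm_def]
    refine ContinuousLinearMap.opNorm_le_bound _ (Real.sqrt_nonneg _) fun w => ?_
    set w' : Fin n → ℂ := WithLp.equiv 2 (Fin n → ℂ) w with hw'
    set T := (Matrix.toEuclideanLin.trans LinearMap.toContinuousLinearMap) B with hT
    have hTw : WithLp.equiv 2 (Fin n → ℂ) (T w) = B *ᵥ w' := by
      simp only [hT, LinearEquiv.trans_apply, LinearMap.coe_toContinuousLinearMap']
      exact Matrix.ofLp_toEuclideanLin_apply B w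
    have hinner : (inner ℂ (T w) (T w) : ℂ) = star (B *ᵥ w') ⬝ᵥ (B *ᵥ w') := by
      rw [EuclideanSpace.inner_eq_star_dotProduct, dotProduct_comm]
      exact congrArg (fun u : Fin n → ℂ => star u ⬝ᵥ u) hTw
    have hwnorm : ‖w‖ ^ 2 = (star w' ⬝ᵥ w').re := by
      rw [← @inner_self_eq_norm_sq ℂ, EuclideanSpace.inner_eq_star_dotProduct, dotProduct_comm]
      rfl
    have hq : ‖T w‖ ^ 2 = (star w' ⬝ᵥ ((Q * ρ * Q) *ᵥ w')).re := by
      rw [← @inner_self_eq_norm_sq ℂ, hinner]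
      rw [Matrix.star_mulVec, ← Matrix.dotProduct_mulVec, Matrix.mulVec_mulVec, hBB]
      rfl
    have h3 : ‖T w‖ ^ 2 ≤ (Real.sqrt (2 * η) * ‖w‖) ^ 2 := by
      rw [mul_pow, Real.sq_sqrt (by positivity)]
      calc ‖T w‖ ^ 2 = (star w' ⬝ᵥ ((Q * ρ * Q) *ᵥ w')).re := hq
        _ ≤ 2 * η * (star w' ⬝ᵥ w').re := hkey w'
        _ = 2 * η * ‖w‖ ^ 2 := by rw [hwnorm]
    have h4 := Real.sqrt_le_sqrt h3
    rwa [Real.sqrt_sq (norm_nonneg _), Real.sqrt_sq (by positivity)] at h4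
  rw [hopeq]
  calc ‖B‖ * ‖B‖ ≤ Real.sqrt (2 * η) * Real.sqrt (2 * η) :=
        mul_le_mul hBle hBle (norm_nonneg _) (Real.sqrt_nonneg _)
    _ = 2 * η := Real.mul_self_sqrt (by positivity)
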